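/- arXiv:1110.5164 — 4 statements merged into one kernel-verified Lean document; each statement's English description precedes it below -/
import Mathlib

section
/- Let p(ξ_n) = ξ_n² + 2iβ ξ_n + q₂ + 2iq₁ be a quadratic polynomial in ξ_n with β > 0, q₁, q₂ ∈ ℝ. Define μ = q₂ + q₁²/β². If μ < 0, then both complex roots of p have strictly negative imaginary part. -/
theorem stmt2 (β q₁ q₂ : ℝ) (hβ : 0 < β) (hμ : q₂ + q₁^2 / β^2 < 0) :
    ∀ z : ℂ,
      z^2 + 2 * Complex.I * (β : ℂ) * z + (q₂ : ℂ) + 2 * Complex.I * (q₁ : ℂ) = 0 →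
      z.im < 0 := by
  intro z hz
  by_contra h
  push_neg at h
  rw [Complex.ext_iff] at hz
  simp [pow_two, Complex.mul_re, Complex.mul_im] at hz
  obtain ⟨h1, h2⟩ := hz
  have hβ2 : (0:ℝ) < β^2 := by positivity
  have hμ' : q₂ * β^2 + q₁^2 < 0 := by
    have := mul_lt_mul_of_pos_right hμ hβ2
    field_simp at this
    nlinarith [this]
  have hq : q₁ = -(z.re * z.im + β * z.re) := by linarith
  have hA : 0 ≤ z.re^2 * (z.im^2 + 2*β*z.im) := by
    have : 0 ≤ z.im^2 + 2*β*z.im := by nlinarith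
    positivity
  have hB : 0 ≤ (z.im^2 + 2*β*z.im) * β^2 := by
    have : 0 ≤ z.im^2 + 2*β*z.im := by nlinarith
    positivity
  have key : q₂ * β^2 + q₁^2
      = z.re^2*(z.im^2+2*β*z.im) + (z.im^2+2*β*z.im)*β^2 := by
    rw [hq]; linear_combination β^2 * h1
  linarith
end

section
/- Let p(ξ_n) = ξ_n² + 2iβ ξ_n + q₂ + 2iq₁ with β > 0, q₁, q₂ ∈ ℝ, and μ = q₂ + q₁²/β². If μ > −β², then the two roots ρ₁, ρ₂ of p have distinct imaginary parts, and ordering them so that Im ρ₁ > Im ρ₂, one has Im ρ₁ > −β > Im ρ₂. -/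
theorem stmt3 (β q₁ q₂ : ℝ) (hβ : 0 < β) (hμ : -β^2 < q₂ + q₁^2 / β^2)
    (ρ₁ ρ₂ : ℂ)
    (hsum : ρ₁ + ρ₂ = -2 * Complex.I * (β : ℂ))
    (hprod : ρ₁ * ρ₂ = (q₂ : ℂ) + 2 * Complex.I * (q₁ : ℂ)) :
    ρ₁.im ≠ ρ₂.im ∧ (ρ₂.im < ρ₁.im → -β < ρ₁.im ∧ ρ₂.im < -β) := by
  have hsre : ρ₁.re + ρ₂.re = 0 := by
    have := congrArg Complex.re hsum; simpa using this
  have hsim : ρ₁.im + ρ₂.im = -(2*β) := by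
    have := congrArg Complex.im hsum; simpa using this
  have hpre : ρ₁.re * ρ₂.re - ρ₁.im * ρ₂.im = q₂ := by
    have := congrArg Complex.re hprod; simpa [Complex.mul_re] using this
  have hpim : ρ₁.re * ρ₂.im + ρ₁.im * ρ₂.re = 2*q₁ := by
    have := congrArg Complex.im hprod; simpa [Complex.mul_im] using this
  have hne : ρ₁.im ≠ ρ₂.im := by
    intro h
    have him1 : ρ₁.im = -β := by linarith
    have him2 : ρ₂.im = -β := by linarith
    have hre : ρ₂.re = -ρ₁.re := by linarith
    have hq1 : q₁ = 0 := by
      rw [him1, him2, hre] at hpim; nlinarith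
    have hq2 : q₂ = -(ρ₁.re^2) - β^2 := by
      rw [him1, him2, hre] at hpre; nlinarith
    rw [hq1, hq2] at hμ; norm_num at hμ
    nlinarith
  exact ⟨hne, fun hlt => ⟨by linarith, by linarith⟩⟩
end

section
/- Let V ∈ ℝ^{n-1} with |V| ≤ ε ≤ 1/2, and define ρ(η') = √(|η'|² − |V|² + 2i η'·V) using the principal branch of the square root. Then for all η' with |η'| ≥ ε one has |η'| − ε ≤ Re ρ(η') ≤ |η'| + ε, and for all η' with |η'| ≥ 2ε one has |Im ρ(η')| ≤ 2ε. -/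
open Complex

lemma sqrt_aux (z : ℂ) (hz : 0 ≤ z.re) :
    0 ≤ (z ^ ((1:ℂ)/2)).re ∧
    (z ^ ((1:ℂ)/2)).re ^ 2 = (‖z‖ + z.re)/2 ∧
    (z ^ ((1:ℂ)/2)).im ^ 2 = (‖z‖ - z.re)/2 := by
  rcases eq_or_ne z 0 with rfl | hz0
  · simp [Complex.zero_cpow (by norm_num : (1:ℂ)/2 ≠ 0)]
  set w := z ^ ((1:ℂ)/2) with hw
  have hsq : w ^ 2 = z := by
    have := Complex.cpow_nat_inv_pow z (n := 2) (by norm_num)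
    simpa [hw, show ((2:ℕ):ℂ)⁻¹ = (1:ℂ)/2 by norm_num] using this
  have hre : 0 ≤ w.re := by
    rw [hw, Complex.cpow_def_of_ne_zero hz0, Complex.exp_re]
    apply mul_nonneg (Real.exp_pos _).le
    apply Real.cos_nonneg_of_mem_Icc
    have harg : |z.arg| ≤ Real.pi / 2 := Complex.abs_arg_le_pi_div_two_iff.2 hz
    have : (Complex.log z * (1/2)).im = z.arg / 2 := by
      simp [Complex.mul_im, Complex.log_im]; ring
    rw [this, abs_le] at *
    exact ⟨by linarith [Real.pi_pos, harg.1], by linarith [Real.pi_pos, harg.2]⟩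
  have habsw : w.re ^ 2 + w.im ^ 2 = ‖z‖ := by
    have h1 : ‖w‖ ^ 2 = ‖z‖ := by rw [← norm_pow, hsq]
    rw [← h1, Complex.sq_norm, Complex.normSq_apply]; ring
  have hrez : w.re ^ 2 - w.im ^ 2 = z.re := by
    have := congrArg Complex.re hsq
    simpa [pow_two, Complex.mul_re] using this
  exact ⟨hre, by linarith, by linarith⟩


lemma im_aux (a zr zi x ε r : ℝ) (h3 : x^2 = (a - zr)/2)
    (habs2 : a^2 = zr^2 + zi^2) (hge : zr ≤ a)
    (hzi : zi^2 ≤ 4*r^2*ε^2) (hbig : (3/2)*r^2 ≤ 2*zr)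
    (hr : 2*ε ≤ r) (hε : 0 < ε) : |x| ≤ 2*ε := by
  have hr2 : 0 < r^2 := by nlinarith
  have step1 : (a - zr) * ((3/2)*r^2) ≤ 4*r^2*ε^2 := by
    nlinarith [mul_nonneg (sub_nonneg.2 hge) (show (0:ℝ) ≤ a + zr - (3/2)*r^2 by linarith)]
  have key : a - zr ≤ 8 * ε^2 := by
    nlinarith [step1, hr2, sq_nonneg ε, mul_pos hr2 (mul_pos hε hε)]
  rw [abs_le]
  exact ⟨by nlinarith [sq_nonneg (x + 2*ε)], by nlinarith [sq_nonneg (x - 2*ε)]⟩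

theorem stmt5 {m : ℕ} (ε : ℝ) (hε1 : 0 < ε) (hε2 : ε ≤ 1/2)
    (V : EuclideanSpace ℝ (Fin m)) (hV : ‖V‖ ≤ ε) :
    ∀ η : EuclideanSpace ℝ (Fin m),
      (ε ≤ ‖η‖ →
        ‖η‖ - ε ≤ ((((‖η‖^2 - ‖V‖^2 : ℝ) : ℂ)
            + 2 * ((inner ℝ η V : ℝ) : ℂ) * Complex.I) ^ ((1:ℂ)/2)).re ∧
        ((((‖η‖^2 - ‖V‖^2 : ℝ) : ℂ)
            + 2 * ((inner ℝ η V : ℝ) : ℂ) * Complex.I) ^ ((1:ℂ)/2)).re ≤ ‖η‖ + ε) ∧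
      (2 * ε ≤ ‖η‖ →
        |((((‖η‖^2 - ‖V‖^2 : ℝ) : ℂ)
            + 2 * ((inner ℝ η V : ℝ) : ℂ) * Complex.I) ^ ((1:ℂ)/2)).im| ≤ 2 * ε) := by
  intro η
  set r := ‖η‖ with hr
  set v := ‖V‖ with hv
  set t : ℝ := inner ℝ η V with ht
  set z : ℂ := (((r^2 - v^2 : ℝ) : ℂ) + 2 * ((t : ℝ) : ℂ) * Complex.I) with hz
  have hzre : z.re = r^2 - v^2 := by simp [hz, ← Complex.ofReal_pow]
  have hzim : z.im = 2 * t := by simp [hz, ← Complex.ofReal_pow]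
  have hv0 : 0 ≤ v := norm_nonneg _
  have ht_cs : |t| ≤ r * v := by
    simpa [ht, hr, hv] using abs_real_inner_le_norm η V
  clear hz hr hv ht
  clear_value z t v r
  constructor
  · intro hεr
    have hr0 : 0 ≤ r := le_trans hε1.le hεr
    have hzre0 : 0 ≤ z.re := by rw [hzre]; nlinarith
    obtain ⟨h1, h2, _⟩ := sqrt_aux z hzre0
    have habs_le : ‖z‖ ≤ (r + ε)^2 := by
      refine le_trans (Complex.norm_le_abs_re_add_abs_im z) ?_
      rw [hzre, hzim, _root_.abs_of_nonneg (show (0:ℝ) ≤ r^2 - v^2 by nlinarith),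
        abs_mul, (by norm_num : |(2:ℝ)| = 2)]
      nlinarith [abs_nonneg t, ht_cs]
    have habs_ge : z.re ≤ ‖z‖ := Complex.re_le_norm z
    constructor
    · nlinarith [h1, h2, habs_ge]
    · nlinarith [h1, h2, habs_le]
  · intro hεr
    have hr0 : 0 ≤ r := le_trans (by linarith) hεr
    have hzre0 : 0 ≤ z.re := by rw [hzre]; nlinarith
    obtain ⟨_, _, h3⟩ := sqrt_aux z hzre0
    have habs2 : ‖z‖ ^ 2 = z.re ^ 2 + z.im ^ 2 := by
      rw [Complex.sq_norm, Complex.normSq_apply]; ring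
    have habs_ge : z.re ≤ ‖z‖ := Complex.re_le_norm z
    have habs_nn : 0 ≤ ‖z‖ := norm_nonneg z
    -- key: (abs z - z.re)*(abs z + z.re) = z.im^2 ≤ 4 r^2 ε^2, abs z + z.re ≥ 2 z.re ≥ (3/2) r^2
    have him_sq : z.im ^ 2 ≤ 4 * r^2 * ε^2 := by
      rw [hzim]
      have h := mul_self_le_mul_self (abs_nonneg t) ht_cs
      have h2 : r * v ≤ r * ε := mul_le_mul_of_nonneg_left hV hr0
      have h4 := mul_self_le_mul_self (mul_nonneg hr0 hv0) h2
      have h5 : t * t ≤ r * ε * (r * ε) := le_trans ((abs_mul_abs_self t).symm.le.trans h) h4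
      nlinarith [h5]
    have hzre_big : (3/2) * r^2 ≤ 2 * z.re := by rw [hzre]; nlinarith
    exact im_aux (‖z‖) z.re z.im _ ε r h3 habs2 habs_ge him_sq hzre_big hεr hε1
end

section
/- Let β > 0 and p(ξ_n) = ξ_n² + 2iβξ_n + q₂ + 2iq₁ with q₁, q₂ ∈ ℝ, μ = q₂ + q₁²/β² > −β², and let ρ₁, ρ₂ be the roots with Im ρ₁ > Im ρ₂. Suppose moreover q₂ ≥ c|ξ'|² − C and |q₁| ≤ C⟨ξ'⟩ for parameters ξ' with c, C > 0 fixed. Then there exist C₁ > 0 and δ > 0 such that |ξ'| ≥ C₁ implies Im ρ₁ ≥ δ|ξ'|. -/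
theorem stmt14 (β c C : ℝ) (hβ : 0 < β) (hc : 0 < c) (hC : 0 < C) :
    ∃ C₁ > 0, ∃ δ > 0, ∀ t : ℝ, C₁ ≤ t →
      ∀ q₁ q₂ : ℝ, ∀ ρ₁ ρ₂ : ℂ,
        c * t^2 - C ≤ q₂ → |q₁| ≤ C * Real.sqrt (1 + t^2) →
        -β^2 < q₂ + q₁^2 / β^2 →
        ρ₁ + ρ₂ = -2 * Complex.I * (β : ℂ) →
        ρ₁ * ρ₂ = (q₂ : ℂ) + 2 * Complex.I * (q₁ : ℂ) →
        ρ₂.im < ρ₁.im →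
        δ * t ≤ ρ₁.im := by
  set δ : ℝ := Real.sqrt c / 2 with hδdef
  have hδ : 0 < δ := by positivity
  have hδ2 : δ ^ 2 = c / 4 := by
    rw [hδdef, div_pow, Real.sq_sqrt hc.le]; ring
  clear hδdef
  clear_value δ
  refine ⟨8 * β * δ / c + 2 * Real.sqrt (C / c) + 1, by positivity, δ, hδ, ?_⟩
  intro t ht q₁ q₂ ρ₁ ρ₂ hq₂ hq₁ hμ hsum hprod him
  have hsC : Real.sqrt (C / c) ^ 2 = C / c := Real.sq_sqrt (by positivity)
  have hsC0 : 0 ≤ Real.sqrt (C / c) := Real.sqrt_nonneg _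
  have ht1 : 1 ≤ t := by nlinarith [Real.sqrt_nonneg (C / c), div_nonneg (by positivity : (0:ℝ) ≤ 8 * β * δ) hc.le]
  have ht0 : 0 < t := by linarith
  -- extract real and imaginary parts
  rw [Complex.ext_iff] at hsum hprod
  simp [Complex.add_re, Complex.add_im, Complex.mul_re, Complex.mul_im] at hsum hprod
  obtain ⟨hsr, hsi⟩ := hsum
  obtain ⟨hpr, hpi⟩ := hprod
  set a := ρ₁.re with ha
  set b := ρ₁.im with hb
  clear_value a b
  -- ρ₂.re = -a, ρ₂.im = -2β - b
  have hre2 : ρ₂.re = -a := by linarith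
  have him2 : ρ₂.im = -(2 * β) - b := by linarith
  rw [hre2, him2] at hpr
  rw [him2] at him
  -- hpr : a * (-a) - b * (-(2β) - b) = q₂
  clear hq₁ hμ hpi hsr hre2
  by_contra hcon
  push_neg at hcon
  have hbβ : -β < b := by linarith
  -- a^2 = b^2 + 2βb - q₂
  have key : a ^ 2 = b ^ 2 + 2 * β * b - q₂ := by nlinarith [hpr]
  have hδt : 0 < δ * t := mul_pos hδ ht0
  have hfac : 0 ≤ (δ * t - b) * (δ * t + b + 2 * β) :=
    mul_nonneg (by linarith) (by linarith)
  have h1 : b ^ 2 + 2 * β * b ≤ δ ^ 2 * t ^ 2 + 2 * β * (δ * t) := by linarith [hfac]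
  rw [hδ2] at h1
  have hdiv0 : (0:ℝ) ≤ 8 * β * δ / c := by positivity
  have ht8 : 8 * β * δ ≤ c * t := by
    have h := (div_le_iff₀ hc).mp (show 8 * β * δ / c ≤ t by linarith)
    linarith
  have h2 : 2 * β * (δ * t) ≤ c / 4 * t ^ 2 := by
    have h := mul_le_mul_of_nonneg_right ht8 ht0.le
    linarith [h]
  have hts : 2 * Real.sqrt (C / c) ≤ t := by linarith
  have h4 : 4 * (C / c) ≤ t ^ 2 := by
    have h := mul_nonneg (by linarith : (0:ℝ) ≤ t - 2 * Real.sqrt (C / c))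
      (by linarith [hsC0] : (0:ℝ) ≤ t + 2 * Real.sqrt (C / c))
    linarith [h, hsC]
  have h5 : c * (4 * (C / c)) ≤ c * t ^ 2 := mul_le_mul_of_nonneg_left h4 hc.le
  have h6 : c * (4 * (C / c)) = 4 * C := by field_simp
  have h3 : C ≤ c / 4 * t ^ 2 := by linarith
  have htt : 0 < c * t ^ 2 := by positivity
  linarith [key, sq_nonneg a, htt]
end
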